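/- Let (R,m,k) be an artinian local ring such that soc(R) is not contained in m² (equivalently, k is a direct summand of Ω²(M) for every non-free finitely generated R-module M) and such that R is not injective as a module over itself (i.e., R is not Gorenstein). Then every finitely generated reflexive R-module is free. -/

import Mathlib

open IsLocalRing

universe u

section Helpers

variable {R : Type u} [CommRing R] [IsLocalRing R]

/-- The linear map `R ⧸ m → M` sending `1` to a vector killed by `m`. -/
noncomputable def residueToModule (M : Type u) [AddCommGroup M] [Module R M]
    (x : M) (hx : ∀ t ∈ maximalIdeal R, t • x = 0) :
    (R ⧸ maximalIdeal R) →ₗ[R] M :=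
  Submodule.liftQ (maximalIdeal R) (LinearMap.toSpanSingleton R M x)
    (fun t ht => by simpa [LinearMap.mem_ker] using hx t ht)

@[simp] lemma residueToModule_mk (M : Type u) [AddCommGroup M] [Module R M]
    (x : M) (hx : ∀ t ∈ maximalIdeal R, t • x = 0) (r : R) :
    residueToModule M x hx (Submodule.Quotient.mk r) = r • x := by
  show Submodule.liftQ _ _ _ (Submodule.Quotient.mk r) = _
  rw [Submodule.liftQ_apply, LinearMap.toSpanSingleton_apply]

lemma residueToModule_one (M : Type u) [AddCommGroup M] [Module R M]
    (x : M) (hx : ∀ t ∈ maximalIdeal R, t • x = 0) :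
    residueToModule M x hx 1 = x := by
  have : (1 : R ⧸ maximalIdeal R) = Submodule.Quotient.mk 1 := rfl
  rw [this, residueToModule_mk, one_smul]

/-- On a module killed by the maximal ideal, any nonzero vector admits a functional to the
residue field taking value 1 on it. -/
lemma exists_functional_to_residue (V : Type u) [AddCommGroup V] [Module R V]
    (htor : ∀ t ∈ maximalIdeal R, ∀ v : V, t • v = 0) (v : V) (hv : v ≠ 0) :
    ∃ g : V →ₗ[R] (R ⧸ maximalIdeal R), g v = 1 := by
  letI : Field (R ⧸ maximalIdeal R) := Ideal.Quotient.field _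
  have hT : Module.IsTorsionBySet R V ((maximalIdeal R : Ideal R) : Set R) :=
    fun x a => htor a.1 a.2 x
  letI : Module (R ⧸ maximalIdeal R) V := hT.module
  haveI : IsScalarTower R (R ⧸ maximalIdeal R) V := hT.isScalarTower
  let ι : (R ⧸ maximalIdeal R) →ₗ[R ⧸ maximalIdeal R] V :=
    LinearMap.toSpanSingleton (R ⧸ maximalIdeal R) V v
  have hι : LinearMap.ker ι = ⊥ := by
    rw [LinearMap.ker_eq_bot']
    intro c hc
    by_contra hc0
    have hcv : c • v = 0 := by simpa [ι, LinearMap.toSpanSingleton_apply] using hc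
    refine hv ?_
    calc v = (1 : R ⧸ maximalIdeal R) • v := (one_smul _ _).symm
      _ = (c⁻¹ * c) • v := by rw [inv_mul_cancel₀ hc0]
      _ = c⁻¹ • (c • v) := mul_smul _ _ _
      _ = 0 := by rw [hcv, smul_zero]
  obtain ⟨q, hq⟩ := LinearMap.exists_leftInverse_of_injective ι hι
  refine ⟨q.restrictScalars R, ?_⟩
  have : ι 1 = v := by simp [ι]
  have := LinearMap.congr_fun hq 1
  simp only [LinearMap.comp_apply, LinearMap.id_apply] at this
  rw [LinearMap.restrictScalars_apply, ← ‹ι 1 = v›, this]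

end Helpers

section ArtinianLocal

variable {R : Type u} [CommRing R] [IsLocalRing R] [IsArtinianRing R]

lemma exists_pow_maximalIdeal_eq_bot :
    ∃ n : ℕ, maximalIdeal R ^ n = ⊥ := by
  have h := IsArtinianRing.isNilpotent_jacobson_bot (R := R)
  rw [IsLocalRing.jacobson_eq_maximalIdeal ⊥ bot_ne_top] at h
  exact h

/-- There is a minimal power of the maximal ideal which is zero. -/
lemma exists_pow_succ_bot_pow_ne_bot (hm : maximalIdeal R ≠ ⊥) :
    ∃ j : ℕ, 1 ≤ j ∧ maximalIdeal R ^ (j + 1) = ⊥ ∧ maximalIdeal R ^ j ≠ ⊥ := by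
  obtain ⟨n, hn⟩ := exists_pow_maximalIdeal_eq_bot (R := R)
  have hP : ∃ j, maximalIdeal R ^ (j + 1) = ⊥ := by
    cases n with
    | zero =>
      exfalso
      rw [pow_zero, Ideal.one_eq_top] at hn
      exact one_ne_zero ((Submodule.mem_bot R).mp (hn ▸ Submodule.mem_top : (1 : R) ∈ (⊥ : Ideal R)))
    | succ k => exact ⟨k, hn⟩
  classical
  let j := Nat.find hP
  have hj : maximalIdeal R ^ (j + 1) = ⊥ := Nat.find_spec hP
  have hj' : maximalIdeal R ^ j ≠ ⊥ := by
    cases hj0 : j with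
    | zero => rw [pow_zero, Ideal.one_eq_top]; intro h
              exact one_ne_zero ((Submodule.mem_bot R).mp (h ▸ Submodule.mem_top : (1 : R) ∈ (⊥ : Ideal R)))
    | succ i =>
      have hmin := Nat.find_min hP (show i < Nat.find hP by omega)
      exact hmin
  have hj1 : j ≠ 0 := by
    intro h0
    rw [show j = 0 from h0, zero_add, pow_one] at hj
    exact hm hj
  exact ⟨j, Nat.one_le_iff_ne_zero.mpr hj1, hj, hj'⟩

omit [IsArtinianRing R] in
lemma torsion_mem_span {j : ℕ}
    (hj1 : maximalIdeal R ^ (j + 1) = ⊥) :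
    ∀ y ∈ maximalIdeal R ^ j, ∀ t ∈ maximalIdeal R, t * y = 0 := by
  intro y hy t ht
  have : t * y ∈ maximalIdeal R ^ (j + 1) := by
    rw [pow_succ, mul_comm (maximalIdeal R ^ j)]
    exact Ideal.mul_mem_mul ht hy
  rw [hj1] at this
  exact (Submodule.mem_bot R).mp this

end ArtinianLocal

section SocCyclic

variable {R : Type u} [CommRing R] [IsLocalRing R] [IsArtinianRing R]

omit [IsArtinianRing R] in
lemma residue_torsion :
    ∀ t ∈ maximalIdeal R, ∀ z : R ⧸ maximalIdeal R, t • z = 0 := by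
  intro t ht z
  obtain ⟨c, rfl⟩ := Submodule.Quotient.mk_surjective _ z
  rw [← Submodule.Quotient.mk_smul, Submodule.Quotient.mk_eq_zero]
  exact Ideal.mul_mem_right c _ ht

lemma soc_cyclic (hm : maximalIdeal R ≠ ⊥)
    (h : Module.IsReflexive R (R ⧸ maximalIdeal R)) :
    ∃ x : R, x ≠ 0 ∧ (∀ t ∈ maximalIdeal R, t * x = 0) ∧
      ∀ y : R, (∀ t ∈ maximalIdeal R, t * y = 0) → y ∈ Ideal.span {x} := by
  obtain ⟨j, hj1, hjb, hjnb⟩ := exists_pow_succ_bot_pow_ne_bot (R := R) hm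
  obtain ⟨x, hxm, hx0⟩ := Submodule.exists_mem_ne_zero_of_ne_bot hjnb
  have hmx : ∀ t ∈ maximalIdeal R, t * x = 0 := fun t ht =>
    torsion_mem_span hjb x hxm t ht
  refine ⟨x, hx0, hmx, ?_⟩
  intro y hy
  -- torsion of the dual of the residue field
  have htorD : ∀ t ∈ maximalIdeal R, ∀ f : Module.Dual R (R ⧸ maximalIdeal R), t • f = 0 := by
    intro t ht f
    refine LinearMap.ext fun z => ?_
    have : t • z = 0 := residue_torsion t ht z
    rw [LinearMap.smul_apply, LinearMap.zero_apply, smul_eq_mul,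
      show t * f z = f (t • z) by rw [map_smul]; rw [smul_eq_mul], this, map_zero]
  -- the functional sending 1 to x
  have hmx' : ∀ t ∈ maximalIdeal R, t • x = 0 := by simpa [smul_eq_mul] using hmx
  have hmy' : ∀ t ∈ maximalIdeal R, t • y = 0 := by simpa [smul_eq_mul] using hy
  set fx := residueToModule (R := R) R x hmx' with hfx
  have hfx1 : fx 1 = x := residueToModule_one R x hmx'
  have hfxne : fx ≠ 0 := by
    intro h0
    rw [← hfx1] at hx0
    rw [h0] at hx0
    exact hx0 (LinearMap.zero_apply _)
  obtain ⟨g, hg⟩ := exists_functional_to_residue (Module.Dual R (R ⧸ maximalIdeal R))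
    htorD fx hfxne
  set fy := residueToModule (R := R) R y hmy' with hfy
  have hsurj := (Module.bijective_dual_eval R (R ⧸ maximalIdeal R)).2
  obtain ⟨c, hc⟩ := hsurj (fy ∘ₗ g)
  obtain ⟨c', rfl⟩ := Submodule.Quotient.mk_surjective _ c
  have := congrArg (fun Φ => Φ fx) hc
  simp only [Module.Dual.eval_apply, LinearMap.comp_apply] at this
  rw [hg] at this
  have hyy : fx (Submodule.Quotient.mk c') = y := by rw [this, hfy, residueToModule_one]
  rw [hfx, residueToModule_mk, smul_eq_mul] at hyy
  exact Ideal.mem_span_singleton'.mpr ⟨c', hyy⟩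

end SocCyclic

section Injectivity

variable {R : Type u} [CommRing R] [IsLocalRing R] [IsArtinianRing R]

omit [IsLocalRing R] [IsArtinianRing R] in
/-- Extension of a linear functional defined on the whole ring viewed as the top ideal. -/
lemma baer_top (I : Ideal R) (hI : I = ⊤) (φ : I →ₗ[R] R) :
    ∃ g' : R →ₗ[R] R, ∀ (x : R) (mem : x ∈ I), g' x = φ ⟨x, mem⟩ := by
  refine ⟨φ ∘ₗ LinearMap.codRestrict I LinearMap.id (fun r => hI ▸ Submodule.mem_top), ?_⟩
  intro x mem
  rfl

lemma injective_self_of_soc_cyclic (hm : maximalIdeal R ≠ ⊥)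
    (hsoc : ¬ Submodule.torsionBySet R R (maximalIdeal R : Set R) ≤ (maximalIdeal R) ^ 2)
    (hcyc : ∃ x : R, x ≠ 0 ∧ (∀ t ∈ maximalIdeal R, t * x = 0) ∧
      ∀ y : R, (∀ t ∈ maximalIdeal R, t * y = 0) → y ∈ Ideal.span {x}) :
    Module.Injective R R := by
  obtain ⟨x, hx0, hmx, hx⟩ := hcyc
  obtain ⟨s, hsmem, hs2⟩ := SetLike.not_le_iff_exists.mp hsoc
  have hms : ∀ t ∈ maximalIdeal R, t * s = 0 := by
    intro t ht
    have := (Submodule.mem_torsionBySet_iff _ _).mp hsmem ⟨t, ht⟩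
    simpa [smul_eq_mul] using this
  -- span {x} is a simple ideal
  have hsimple : ∀ I : Ideal R, I ≤ Ideal.span {x} → I ≠ ⊥ → I = Ideal.span {x} := by
    intro I hle hne
    obtain ⟨z, hzI, hz0⟩ := Submodule.exists_mem_ne_zero_of_ne_bot hne
    obtain ⟨a, ha⟩ := Ideal.mem_span_singleton'.mp (hle hzI)
    have hau : IsUnit a := by
      by_contra hau
      exact hz0 (by rw [← ha, hmx a hau])
    obtain ⟨u, rfl⟩ := hau
    refine le_antisymm hle ?_
    rw [Ideal.span_le, Set.singleton_subset_iff]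
    have : x = (↑u⁻¹ : R) * z := by
      rw [← ha, ← mul_assoc, Units.inv_mul, one_mul]
    rw [this]
    exact I.mul_mem_left _ hzI
  -- the minimal power j with m^(j+1) = 0 is 1
  obtain ⟨j, hj1, hjb, hjnb⟩ := exists_pow_succ_bot_pow_ne_bot (R := R) hm
  have hjx : maximalIdeal R ^ j = Ideal.span {x} := by
    refine hsimple _ ?_ hjnb
    intro y hy
    exact hx y (fun t ht => torsion_mem_span hjb y hy t ht)
  have hjeq : j = 1 := by
    by_contra hj
    have hj2 : 2 ≤ j := by omega
    have hxm2 : x ∈ (maximalIdeal R) ^ 2 := by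
      have : x ∈ maximalIdeal R ^ j := hjx ▸ Ideal.mem_span_singleton_self x
      exact Ideal.pow_le_pow_right hj2 this
    have hsx : s ∈ Ideal.span {x} := hx s hms
    obtain ⟨a, ha⟩ := Ideal.mem_span_singleton'.mp hsx
    exact hs2 (ha ▸ Ideal.mul_mem_left _ a hxm2)
  have hmspan : maximalIdeal R = Ideal.span {x} := by rw [← hjx, hjeq, pow_one]
  have hm2 : maximalIdeal R ^ 2 = ⊥ := by rw [← hjb, hjeq]
  have hxx : x * x = 0 := by
    have : x * x ∈ maximalIdeal R ^ 2 := by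
      rw [pow_two]
      exact Ideal.mul_mem_mul (hmspan ▸ Ideal.mem_span_singleton_self x)
        (hmspan ▸ Ideal.mem_span_singleton_self x)
    rw [hm2] at this
    exact (Submodule.mem_bot R).mp this
  -- Baer's criterion
  refine Module.Baer.injective ?_
  intro I φ
  by_cases hI : I = ⊤
  · exact baer_top I hI φ
  · have hIm : I ≤ maximalIdeal R := IsLocalRing.le_maximalIdeal hI
    by_cases hIbot : I = ⊥
    · refine ⟨0, ?_⟩
      intro y mem
      have hy0 : y = 0 := (Submodule.mem_bot R).mp (hIbot ▸ mem)
      subst hy0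
      rw [LinearMap.zero_apply, show (⟨0, mem⟩ : I) = 0 from rfl, map_zero]
    · have hIx : I = Ideal.span {x} := hsimple I (hIm.trans_eq hmspan) hIbot
      have hxI : x ∈ I := hIx ▸ Ideal.mem_span_singleton_self x
      set b := φ ⟨x, hxI⟩ with hb
      have hxb : x * b = 0 := by
        have : x • (⟨x, hxI⟩ : I) = 0 := by
          apply Subtype.ext
          simp [smul_eq_mul, hxx]
        rw [show x * b = x • b from rfl, hb, ← map_smul, this, map_zero]
      have hmb : ∀ t ∈ maximalIdeal R, t * b = 0 := by
        intro t ht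
        obtain ⟨a, ha⟩ := Ideal.mem_span_singleton'.mp (hmspan ▸ ht)
        calc t * b = a * (x * b) := by rw [← ha]; ring
          _ = 0 := by rw [hxb, mul_zero]
      have hbspan : b ∈ Ideal.span {x} := hx b hmb
      obtain ⟨c, hc⟩ := Ideal.mem_span_singleton'.mp hbspan
      refine ⟨LinearMap.toSpanSingleton R R c, ?_⟩
      intro y mem
      obtain ⟨a, ha⟩ := Ideal.mem_span_singleton'.mp (hIx ▸ mem)
      have : (⟨y, mem⟩ : I) = a • ⟨x, hxI⟩ := by
        apply Subtype.ext
        simp [smul_eq_mul, ha]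
      rw [this, map_smul, ← hb, LinearMap.toSpanSingleton_apply]
      rw [smul_eq_mul, smul_eq_mul, ← ha, ← hc]
      ring
  
end Injectivity

section KeyConstruction

variable {R : Type u} [CommRing R] [IsLocalRing R] [IsArtinianRing R]

/-- If `M` is a nontrivial reflexive module all of whose functionals take values in the maximal
ideal, and the socle is not contained in `m²`, then the residue field is reflexive. -/
lemma isReflexive_residueField_of_module
    (M : Type u) [AddCommGroup M] [Module R M] [Module.IsReflexive R M] [Nontrivial M]
    (hall : ∀ (f : Module.Dual R M) (x : M), f x ∈ maximalIdeal R)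
    {s : R} (hs : ∀ t ∈ maximalIdeal R, t * s = 0) (hs2 : s ∉ (maximalIdeal R) ^ 2) :
    Module.IsReflexive R (R ⧸ maximalIdeal R) := by
  set m := maximalIdeal R with hmdef
  -- the dual is nontrivial
  have hDnt : Nontrivial (Module.Dual R M) := by
    by_contra hD
    haveI hDs : Subsingleton (Module.Dual R M) := not_nontrivial_iff_subsingleton.mp hD
    haveI : Subsingleton (Module.Dual R (Module.Dual R M)) :=
      ⟨fun f g => LinearMap.ext fun z => by rw [Subsingleton.elim z 0, map_zero, map_zero]⟩
    haveI := (Module.evalEquiv R M).toEquiv.subsingleton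
    exact not_subsingleton_iff_nontrivial.mpr ‹Nontrivial M› ‹_›
  -- the quotient of the dual by m • ⊤ is nontrivial
  have hsmul_top : ∀ (V : Type u) [AddCommGroup V] [Module R V], Nontrivial V →
      m • (⊤ : Submodule R V) ≠ ⊤ := by
    intro V _ _ hV h
    obtain ⟨n, hn⟩ := exists_pow_maximalIdeal_eq_bot (R := R)
    have hiter : ∀ k : ℕ, (⊤ : Submodule R V) = m ^ k • ⊤ := by
      intro k
      induction k with
      | zero => rw [pow_zero, Ideal.one_eq_top, Submodule.top_smul]
      | succ i ih =>
        have : m ^ (i + 1) • (⊤ : Submodule R V) = m • (m ^ i • ⊤) := by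
          rw [show m ^ (i+1) = m • m ^ i by rw [Ideal.smul_eq_mul, pow_succ, mul_comm],
            Submodule.smul_assoc]
        rw [this, ← ih, h]
    have := hiter n
    rw [hn, Submodule.bot_smul] at this
    exact not_subsingleton_iff_nontrivial.mpr hV
      (subsingleton_iff_forall_eq 0 |>.mpr fun y => by
        have : (y : V) ∈ (⊥ : Submodule R V) := this ▸ Submodule.mem_top
        simpa using this)
  set N := Module.Dual R M ⧸ (m • (⊤ : Submodule R (Module.Dual R M))) with hNdef
  haveI hNnt : Nontrivial N :=
    Submodule.Quotient.nontrivial_iff.mpr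
      (lt_top_iff_ne_top.mpr (hsmul_top (Module.Dual R M) hDnt)).ne
  obtain ⟨ν, hν⟩ := exists_ne (0 : N)
  obtain ⟨lam1, hlam1⟩ := Submodule.Quotient.mk_surjective _ ν
  have htorN : ∀ t ∈ m, ∀ w : N, t • w = 0 := by
    intro t ht w
    obtain ⟨d, rfl⟩ := Submodule.Quotient.mk_surjective _ w
    rw [← Submodule.Quotient.mk_smul, Submodule.Quotient.mk_eq_zero]
    exact Submodule.smul_mem_smul ht Submodule.mem_top
  obtain ⟨g, hg⟩ := exists_functional_to_residue N htorN ν hν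
  have hssmul : ∀ t ∈ m, t • s = 0 := by simpa [smul_eq_mul] using hs
  set ls : (R ⧸ m) →ₗ[R] R := residueToModule R s hssmul with hls
  set Λ : Module.Dual R (Module.Dual R M) :=
    ls ∘ₗ g ∘ₗ Submodule.mkQ (m • (⊤ : Submodule R (Module.Dual R M))) with hΛdef
  have hΛ1 : Λ lam1 = s := by
    rw [hΛdef]
    simp only [LinearMap.comp_apply]
    rw [show (m • (⊤ : Submodule R (Module.Dual R M))).mkQ lam1 = ν from hlam1,
      hg, hls, residueToModule_one]
  have hΛr : ∀ f : Module.Dual R M, ∃ c : R, Λ f = c * s := by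
    intro f
    obtain ⟨c, hc⟩ := Submodule.Quotient.mk_surjective m
      (g (Submodule.Quotient.mk f))
    refine ⟨c, ?_⟩
    rw [hΛdef]
    simp only [LinearMap.comp_apply]
    rw [show (m • (⊤ : Submodule R (Module.Dual R M))).mkQ f = Submodule.Quotient.mk f from rfl,
      ← hc, hls, residueToModule_mk, smul_eq_mul]
  set x0 := (Module.evalEquiv R M).symm Λ with hx0def
  have hx0 : ∀ f : Module.Dual R M, f x0 = Λ f := fun f =>
    Module.apply_evalEquiv_symm_apply R M f Λ
  have hmx0 : ∀ t ∈ m, t • x0 = 0 := by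
    intro t ht
    have hΛ0 : t • Λ = 0 := by
      refine LinearMap.ext fun f => ?_
      obtain ⟨c, hc⟩ := hΛr f
      rw [LinearMap.smul_apply, LinearMap.zero_apply, hc, smul_eq_mul]
      calc t * (c * s) = c * (t * s) := by ring
        _ = 0 := by rw [hs t ht, mul_zero]
    rw [hx0def, ← map_smul, hΛ0, map_zero]
  have hx0nm : x0 ∉ m • (⊤ : Submodule R M) := by
    intro hmem
    have h1 : lam1 x0 ∈ Submodule.map lam1 (m • (⊤ : Submodule R M)) :=
      Submodule.mem_map_of_mem hmem
    rw [Submodule.map_smul''] at h1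
    have h2 : Submodule.map lam1 ⊤ ≤ m := by
      rintro _ ⟨z, -, rfl⟩
      exact hall lam1 z
    have h3 : lam1 x0 ∈ m • m := Submodule.smul_mono (le_refl m) h2 h1
    rw [Ideal.smul_eq_mul, ← pow_two] at h3
    rw [hx0, hΛ1] at h3
    exact hs2 h3
  -- build the splitting of M through the residue field
  have hx0ne : Submodule.Quotient.mk (p := m • (⊤ : Submodule R M)) x0 ≠ 0 := by
    rw [Ne, Submodule.Quotient.mk_eq_zero]
    exact hx0nm
  have htorN2 : ∀ t ∈ m, ∀ w : M ⧸ (m • (⊤ : Submodule R M)), t • w = 0 := by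
    intro t ht w
    obtain ⟨d, rfl⟩ := Submodule.Quotient.mk_surjective _ w
    rw [← Submodule.Quotient.mk_smul, Submodule.Quotient.mk_eq_zero]
    exact Submodule.smul_mem_smul ht Submodule.mem_top
  obtain ⟨g2, hg2⟩ := exists_functional_to_residue (M ⧸ (m • (⊤ : Submodule R M)))
    htorN2 _ hx0ne
  set p : M →ₗ[R] (R ⧸ m) := g2 ∘ₗ Submodule.mkQ _ with hpdef
  set i : (R ⧸ m) →ₗ[R] M := residueToModule M x0 hmx0 with hidef
  have hpi : p ∘ₗ i = LinearMap.id := by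
    apply Submodule.linearMap_qext
    refine LinearMap.ext fun r => ?_
    simp only [LinearMap.comp_apply, Submodule.mkQ_apply, LinearMap.id_apply]
    rw [hidef, residueToModule_mk, hpdef]
    simp only [LinearMap.comp_apply, Submodule.mkQ_apply]
    rw [Submodule.Quotient.mk_smul, map_smul, hg2,
      show (1 : R ⧸ m) = Submodule.Quotient.mk (1 : R) from rfl,
      ← Submodule.Quotient.mk_smul, smul_eq_mul, mul_one]
  exact Module.IsReflexive.of_split i p hpi

end KeyConstruction

theorem stmt5 (R : Type u) [CommRing R] [IsArtinianRing R] [IsLocalRing R]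
    (hsoc : ¬ Submodule.torsionBySet R R (maximalIdeal R : Set R) ≤ (maximalIdeal R) ^ 2)
    (hGor : ¬ Module.Injective R R)
    (M : Type u) [AddCommGroup M] [Module R M] [Module.Finite R M]
    (hrefl : Module.IsReflexive R M) :
    Module.Free R M := by
  haveI := hrefl
  by_cases hm : maximalIdeal R = ⊥
  · exfalso
    apply hGor
    refine Module.Baer.injective ?_
    intro I φ
    by_cases hI : I = ⊤
    · exact baer_top I hI φ
    · have hIb : I = ⊥ := le_bot_iff.mp (hm ▸ IsLocalRing.le_maximalIdeal hI)
      refine ⟨0, ?_⟩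
      intro y mem
      have hy0 : y = 0 := (Submodule.mem_bot R).mp (hIb ▸ mem)
      subst hy0
      rw [LinearMap.zero_apply, show (⟨0, mem⟩ : I) = 0 from rfl, map_zero]
  · have hKnr : ¬ Module.IsReflexive R (R ⧸ maximalIdeal R) := fun h =>
      hGor (injective_self_of_soc_cyclic hm hsoc (soc_cyclic hm h))
    obtain ⟨s, hsmem, hs2⟩ := SetLike.not_le_iff_exists.mp hsoc
    have hms : ∀ t ∈ maximalIdeal R, t * s = 0 := by
      intro t ht
      have := (Submodule.mem_torsionBySet_iff _ _).mp hsmem ⟨t, ht⟩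
      simpa [smul_eq_mul] using this
    have main : ∀ N : Submodule R M, Module.IsReflexive R ↥N → Module.Free R ↥N := by
      intro N
      refine IsArtinian.induction (P := fun N => Module.IsReflexive R ↥N → Module.Free R ↥N) (fun N IH => ?_) N
      intro hNrefl
      haveI := hNrefl
      by_cases htriv : Subsingleton (↥N)
      · exact Module.Free.of_subsingleton R ↥N
      · haveI : Nontrivial ↥N := not_subsingleton_iff_nontrivial.mp htriv
        by_cases hsur : ∃ f : Module.Dual R ↥N, Function.Surjective f
        · obtain ⟨f, hf⟩ := hsur
          obtain ⟨uu, huu⟩ := hf 1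
          set σ := LinearMap.toSpanSingleton R ↥N uu with hσ
          have hfσ : ∀ r : R, f (σ r) = r := by
            intro r
            rw [hσ, LinearMap.toSpanSingleton_apply, map_smul, huu, smul_eq_mul, mul_one]
          have hker : ∀ z : ↥N, z - σ (f z) ∈ LinearMap.ker f := by
            intro z
            rw [LinearMap.mem_ker, map_sub, hfσ, sub_self]
          set π : ↥N →ₗ[R] ↥(LinearMap.ker f) :=
            LinearMap.codRestrict _ (LinearMap.id - σ ∘ₗ f) (fun z => by
              simpa using hker z) with hπ
          have hπapp : ∀ z : ↥N, (π z : ↥N) = z - σ (f z) := fun z => rfl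
          have hπs : π ∘ₗ (LinearMap.ker f).subtype = LinearMap.id := by
            refine LinearMap.ext fun z => ?_
            apply Subtype.ext
            have hz : f z.1 = 0 := z.2
            rw [LinearMap.comp_apply, LinearMap.id_apply, Submodule.subtype_apply, hπapp,
              hz, map_zero, sub_zero]
          haveI hrefker : Module.IsReflexive R ↥(LinearMap.ker f) :=
            Module.IsReflexive.of_split (LinearMap.ker f).subtype π hπs
          have h1 : (LinearMap.prod π f) ∘ₗ ((LinearMap.ker f).subtype.coprod σ)
              = LinearMap.id := by
            refine LinearMap.ext fun zr => ?_
            obtain ⟨z, r⟩ := zr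
            have hz : f z.1 = 0 := z.2
            apply Prod.ext
            · apply Subtype.ext
              simp [hπapp, hfσ, hz]
            · simp [hfσ, hz]
          have h2 : ((LinearMap.ker f).subtype.coprod σ) ∘ₗ (LinearMap.prod π f)
              = LinearMap.id := by
            refine LinearMap.ext fun z => ?_
            simp [hπapp]
          set e : ↥N ≃ₗ[R] ↥(LinearMap.ker f) × R :=
            LinearEquiv.ofLinear (LinearMap.prod π f) ((LinearMap.ker f).subtype.coprod σ) h1 h2
            with he
          have heq : ↥(LinearMap.ker f) ≃ₗ[R] ↥(Submodule.map N.subtype (LinearMap.ker f)) :=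
            Submodule.equivMapOfInjective N.subtype (Submodule.injective_subtype N) _
          have hne : Submodule.map N.subtype (LinearMap.ker f) ≠ N := by
            intro hEQ
            have huuN : (uu : M) ∈ Submodule.map N.subtype (LinearMap.ker f) := by
              rw [hEQ]; exact uu.2
            obtain ⟨z, hzker, hzeq⟩ := huuN
            have hzuu : z = uu := Subtype.ext hzeq
            rw [hzuu] at hzker
            have h0 : f uu = 0 := LinearMap.mem_ker.mp hzker
            rw [huu] at h0
            exact one_ne_zero h0
          have hlt : Submodule.map N.subtype (LinearMap.ker f) < N :=
            lt_of_le_of_ne (Submodule.map_subtype_le N _) hne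
          have hfreeN' : Module.Free R ↥(Submodule.map N.subtype (LinearMap.ker f)) :=
            IH _ hlt (Module.equiv heq)
          haveI := hfreeN'
          haveI : Module.Free R ↥(LinearMap.ker f) := Module.Free.of_equiv heq.symm
          exact Module.Free.of_equiv e.symm
        · push_neg at hsur
          have hall : ∀ (f : Module.Dual R ↥N) (x : ↥N), f x ∈ maximalIdeal R := by
            intro f x
            have hne : LinearMap.range f ≠ ⊤ := fun h => hsur f (LinearMap.range_eq_top.mp h)
            exact IsLocalRing.le_maximalIdeal hne (LinearMap.mem_range_self f x)
          exact absurd (isReflexive_residueField_of_module ↥N hall hms hs2) hKnr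
    haveI : Module.IsReflexive R ↥(⊤ : Submodule R M) := Module.equiv Submodule.topEquiv.symm
    haveI := main ⊤ this
    exact Module.Free.of_equiv (Submodule.topEquiv (R := R) (M := M))
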